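/- Let f : V₁ → V₂ be a linear map between finite-dimensional real inner product spaces and let det'(f) denote the product of the nonzero singular values of f (with det'(f) = 1 if f = 0). Then det'(f) ≤ ‖f‖^(rank f), with the convention 0^0 = 1. -/

import Mathlib

open Module

/-- The geometric determinant `det'(f)`: the product of the nonzero singular values of `f`,
where a singular value is a nonnegative real `x` with `x²` an eigenvalue of `f* ∘ f`
(counted with multiplicity); by convention `det'(f) = 1` if `f = 0`. -/
noncomputable def detp {𝕜 E F : Type*} [RCLike 𝕜] [NormedAddCommGroup E] [InnerProductSpace 𝕜 E]
    [NormedAddCommGroup F] [InnerProductSpace 𝕜 F] [FiniteDimensional 𝕜 E] [FiniteDimensional 𝕜 F]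
    (f : E →ₗ[𝕜] F) : ℝ :=
  have hT : (LinearMap.adjoint f ∘ₗ f).IsSymmetric := fun x y => by
    simp only [LinearMap.comp_apply, LinearMap.adjoint_inner_left, LinearMap.adjoint_inner_right]
  ∏ i : Fin (finrank 𝕜 E),
    if hT.eigenvalues rfl i = 0 then 1 else Real.sqrt (hT.eigenvalues rfl i)

theorem stmt0 {V₁ V₂ : Type*} [NormedAddCommGroup V₁] [InnerProductSpace ℝ V₁]
    [NormedAddCommGroup V₂] [InnerProductSpace ℝ V₂]
    [FiniteDimensional ℝ V₁] [FiniteDimensional ℝ V₂] (f : V₁ →ₗ[ℝ] V₂) :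
    detp f ≤ ‖LinearMap.toContinuousLinearMap f‖ ^ (finrank ℝ (LinearMap.range f)) := by
  classical
  set T : V₁ →ₗ[ℝ] V₁ := LinearMap.adjoint f ∘ₗ f with hTdef
  have hT : T.IsSymmetric := fun x y => by
    simp only [hTdef, LinearMap.comp_apply, LinearMap.adjoint_inner_left,
      LinearMap.adjoint_inner_right]
  set μ : Fin (finrank ℝ V₁) → ℝ := hT.eigenvalues rfl with hμdef
  set b := hT.eigenvectorBasis rfl with hbdef
  -- each eigenvalue equals ‖f (b i)‖²
  have hval : ∀ i, μ i = ‖f (b i)‖ ^ 2 := by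
    intro i
    have h1 : T (b i) = (μ i : ℝ) • b i := hT.apply_eigenvectorBasis rfl i
    have h2 : (inner ℝ (T (b i)) (b i) : ℝ) = ‖f (b i)‖ ^ 2 := by
      simp only [hTdef, LinearMap.comp_apply, LinearMap.adjoint_inner_left]
      rw [real_inner_self_eq_norm_sq]
    have h3 : (inner ℝ (T (b i)) (b i) : ℝ) = μ i := by
      rw [h1, real_inner_smul_left, real_inner_self_eq_norm_sq, b.orthonormal.1 i]
      ring
    rw [← h3, h2]
  set C := ‖LinearMap.toContinuousLinearMap f‖ with hCdef
  have hC0 : 0 ≤ C := norm_nonneg _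
  have hbound : ∀ i, Real.sqrt (μ i) ≤ C := by
    intro i
    have h1 : ‖f (b i)‖ ≤ C := by
      have := (LinearMap.toContinuousLinearMap f).le_opNorm (b i)
      simpa [hCdef, b.orthonormal.1 i] using this
    calc Real.sqrt (μ i) = ‖f (b i)‖ := by
          rw [hval i, Real.sqrt_sq (norm_nonneg _)]
      _ ≤ C := h1
  -- rank f equals the number of nonzero eigenvalues
  have hker : LinearMap.ker T = LinearMap.ker f := by
    ext x
    simp only [LinearMap.mem_ker]
    constructor
    · intro h
      have : (inner ℝ (f x) (f x) : ℝ) = 0 := by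
        rw [← LinearMap.adjoint_inner_left]
        show (inner ℝ (T x) x : ℝ) = 0
        rw [h, inner_zero_left]
      exact inner_self_eq_zero.mp this
    · intro h
      show LinearMap.adjoint f (f x) = 0
      rw [h, map_zero]
  have hrankTf : finrank ℝ (LinearMap.range T) = finrank ℝ (LinearMap.range f) := by
    have h1 := LinearMap.finrank_range_add_finrank_ker T
    have h2 := LinearMap.finrank_range_add_finrank_ker f
    rw [hker] at h1
    omega
  have hrangeT : LinearMap.range T =
      Submodule.span ℝ (Set.range fun i : {i // μ i ≠ 0} => (b i : V₁)) := by
    have h1 : LinearMap.range T = Submodule.map T (Submodule.span ℝ (Set.range (b : _ → V₁))) := by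
      conv_lhs => rw [LinearMap.range_eq_map T, ← b.toBasis.span_eq]
      rw [b.coe_toBasis]
    rw [h1, Submodule.map_span, ← Set.range_comp]
    apply le_antisymm
    · rw [Submodule.span_le]
      rintro _ ⟨i, rfl⟩
      simp only [Function.comp_apply]
      rw [hT.apply_eigenvectorBasis rfl i]
      by_cases h : μ i = 0
      · show (μ i : ℝ) • b i ∈ _
        rw [h, zero_smul]
        exact Submodule.zero_mem _
      · exact Submodule.smul_mem _ _ (Submodule.subset_span ⟨⟨i, h⟩, rfl⟩)
    · rw [Submodule.span_le]
      rintro _ ⟨⟨i, hi⟩, rfl⟩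
      have hTi : T (b i) = (μ i : ℝ) • b i := hT.apply_eigenvectorBasis rfl i
      have hbi : (b i : V₁) = (μ i)⁻¹ • (T (b i)) := by
        rw [hTi, smul_smul, inv_mul_cancel₀ hi, one_smul]
      show (b i : V₁) ∈ Submodule.span ℝ (Set.range (⇑T ∘ ⇑b))
      rw [hbi]
      exact Submodule.smul_mem _ _ (Submodule.subset_span ⟨i, rfl⟩)
  have hcard : finrank ℝ (LinearMap.range f) = Fintype.card {i // μ i ≠ 0} := by
    rw [← hrankTf, hrangeT]
    have hli : LinearIndependent ℝ (fun i : {i // μ i ≠ 0} => (b i : V₁)) := by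
      have := b.toBasis.linearIndependent.comp
        (Subtype.val : {i // μ i ≠ 0} → _) Subtype.val_injective
      simpa [Function.comp_def] using this
    exact finrank_span_eq_card hli
  -- rewrite detp as a product over the nonzero eigenvalues
  have hdetp : detp f = ∏ i ∈ Finset.univ.filter (fun i => μ i ≠ 0), Real.sqrt (μ i) := by
    rw [detp]
    rw [Finset.prod_filter]
    apply Finset.prod_congr rfl
    intro i _
    by_cases h : μ i = 0 <;> simp [h, hμdef]
  rw [hdetp, hcard]
  calc (∏ i ∈ Finset.univ.filter (fun i => μ i ≠ 0), Real.sqrt (μ i))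
      ≤ ∏ _i ∈ Finset.univ.filter (fun i => μ i ≠ 0), C :=
        Finset.prod_le_prod (fun i _ => Real.sqrt_nonneg _) (fun i _ => hbound i)
    _ = C ^ (Finset.univ.filter (fun i => μ i ≠ 0)).card := Finset.prod_const C
    _ = C ^ Fintype.card {i // μ i ≠ 0} := by
        congr 1
        exact (Fintype.card_subtype _).symm
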